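/- Let 1 ≤ p < ∞ and let f : 𝔻 → ℂ be analytic on the open unit disk. Then the function r ↦ (∫_𝕋 |f(rξ)|^p dm(ξ))^{1/p} is nondecreasing on [0,1), where m is normalized Lebesgue measure on the unit circle. -/

import Mathlib

open Real Complex Metric intervalIntegral MeasureTheory

noncomputable def Complex.abs : AbsoluteValue ℂ ℝ := NormedField.toAbsoluteValue ℂ

theorem Complex.norm_eq_abs (z : ℂ) : ‖z‖ = Complex.abs z := rfl

theorem Complex.abs_exp_ofReal_mul_I (t : ℝ) : Complex.abs (Complex.exp (t * Complex.I)) = 1 :=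
  Complex.norm_exp_ofReal_mul_I t

theorem Complex.sq_abs (z : ℂ) : Complex.abs z ^ 2 = Complex.normSq z := Complex.sq_norm z

theorem Complex.abs_conj (z : ℂ) : Complex.abs ((starRingEnd ℂ) z) = Complex.abs z :=
  Complex.norm_conj z

theorem Complex.abs_ofReal (r : ℝ) : Complex.abs (r : ℂ) = |r| := Complex.norm_real r

theorem Complex.abs_two : Complex.abs 2 = 2 := Complex.norm_two

theorem Complex.continuous_abs : Continuous Complex.abs := continuous_norm


noncomputable def Pk (a : ℂ) (t : ℝ) : ℝ :=
  (1 - Complex.abs a ^ 2) / Complex.abs (Complex.exp (t * Complex.I) - a) ^ 2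

lemma exp_sub_ne (a : ℂ) (ha : Complex.abs a < 1) (t : ℝ) :
    Complex.exp (t * Complex.I) - a ≠ 0 := by
  intro h
  have h1 : Complex.abs (Complex.exp (t * Complex.I)) = 1 := Complex.abs_exp_ofReal_mul_I t
  rw [sub_eq_zero] at h
  rw [h] at h1
  exact absurd h1 (by linarith)

lemma conj_exp (t : ℝ) :
    (starRingEnd ℂ) (Complex.exp (t * Complex.I)) = (Complex.exp (t * Complex.I))⁻¹ := by
  rw [← Complex.exp_conj, ← Complex.exp_neg]
  congr 1
  simp

lemma Pk_complex (a : ℂ) (ha : Complex.abs a < 1) (t : ℝ) :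
    (Pk a t : ℂ) = (1 - a * (starRingEnd ℂ) a) /
      ((Complex.exp (t * Complex.I) - a) *
        ((Complex.exp (t * Complex.I))⁻¹ - (starRingEnd ℂ) a)) := by
  set z := Complex.exp (t * Complex.I) with hzdef
  have h1 : ((Complex.abs a : ℂ)) ^ 2 = a * (starRingEnd ℂ) a := by
    rw [← Complex.ofReal_pow, Complex.sq_abs, Complex.mul_conj]
  have h2 : ((Complex.abs (z - a) : ℂ)) ^ 2 = (z - a) * (z⁻¹ - (starRingEnd ℂ) a) := by
    rw [← Complex.ofReal_pow, Complex.sq_abs, ← Complex.mul_conj]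
    rw [map_sub, conj_exp]
  rw [Pk]
  push_cast
  rw [h1, h2]




lemma contOn_comp_exp {g : ℂ → ℂ} {R : ℝ} (hR : 1 < R)
    (hg : DifferentiableOn ℂ g (Metric.ball 0 R)) :
    Continuous fun t : ℝ => g (Complex.exp (t * Complex.I)) := by
  apply hg.continuousOn.comp_continuous
  · exact Complex.continuous_exp.comp (continuous_ofReal.mul continuous_const)
  · intro t
    simp only [mem_ball_zero_iff]
    rw [Complex.norm_eq_abs, Complex.abs_exp_ofReal_mul_I]
    exact hR

lemma poisson_formula (g : ℂ → ℂ) {R : ℝ} (hR : 1 < R)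
    (hg : DifferentiableOn ℂ g (Metric.ball 0 R)) {a : ℂ} (ha : Complex.abs a < 1) :
    ∫ t in (0:ℝ)..(2*π), (Pk a t : ℂ) * g (Complex.exp (t * Complex.I))
      = 2 * π * g a := by
  set b := (starRingEnd ℂ) a with hb
  have hab : Complex.abs b = Complex.abs a := Complex.abs_conj a
  -- g is DiffContOnCl on unit ball
  have hsub : closedBall (0:ℂ) 1 ⊆ Metric.ball 0 R := closedBall_subset_ball hR
  have hdc : DiffContOnCl ℂ g (Metric.ball 0 1) :=
    ⟨hg.mono (ball_subset_ball hR.le), hg.continuousOn.mono (by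
      rw [closure_ball (0:ℂ) one_ne_zero]; exact hsub)⟩
  have c1 := hdc.circleIntegral_sub_inv_smul (w := a) (mem_ball_zero_iff.2 (by
    rwa [Complex.norm_eq_abs]))
  -- the auxiliary function
  set h : ℂ → ℂ := fun z => (b * z / (1 - b * z)) * g z with hh
  set R₀ : ℝ := min R (2 / (1 + Complex.abs a)) with hR₀def
  have hR₀ : 1 < R₀ := by
    apply lt_min hR
    rw [lt_div_iff₀ (by positivity)]
    linarith
  have hden : ∀ z ∈ Metric.ball (0:ℂ) R₀, 1 - b * z ≠ 0 := by
    intro z hz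
    rw [mem_ball_zero_iff, Complex.norm_eq_abs] at hz
    intro hcon
    have h1 : Complex.abs (b * z) = 1 := by
      have : b * z = 1 := by linear_combination -hcon
      rw [this]; simp
    rw [map_mul, hab] at h1
    have h2 : Complex.abs a * Complex.abs z ≤ Complex.abs a * R₀ := by
      have := Complex.abs.nonneg a
      nlinarith
    have h3 : R₀ ≤ 2 / (1 + Complex.abs a) := min_le_right _ _
    have h4 : Complex.abs a * R₀ ≤ Complex.abs a * (2 / (1 + Complex.abs a)) := by
      have := Complex.abs.nonneg a
      nlinarith
    have h5 : Complex.abs a * (2 / (1 + Complex.abs a)) < 1 := by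
      rw [mul_div_assoc', div_lt_one (by positivity)]
      linarith
    linarith
  have hdh : DifferentiableOn ℂ h (Metric.ball 0 R₀) := by
    apply DifferentiableOn.mul
    · exact DifferentiableOn.div
        ((differentiable_const b).mul differentiable_id).differentiableOn
        ((differentiable_const (1:ℂ)).sub ((differentiable_const b).mul
          differentiable_id)).differentiableOn hden
    · exact hg.mono (ball_subset_ball (min_le_left _ _))
  have hdch : DiffContOnCl ℂ h (Metric.ball 0 1) :=
    ⟨hdh.mono (ball_subset_ball hR₀.le), hdh.continuousOn.mono (by
      rw [closure_ball (0:ℂ) one_ne_zero]; exact closedBall_subset_ball hR₀)⟩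
  have c0 := hdch.circleIntegral_sub_inv_smul (w := 0) (mem_ball_self one_pos)
  have hh0 : h 0 = 0 := by simp [hh]
  rw [hh0, smul_zero] at c0
  simp only [circleIntegral, deriv_circleMap, circleMap_zero, Complex.ofReal_one, one_mul,
    smul_eq_mul, sub_zero] at c1 c0
  have ce : Continuous fun t : ℝ => Complex.exp (t * Complex.I) :=
    Complex.continuous_exp.comp (Complex.continuous_ofReal.mul continuous_const)
  have hexp_ne : ∀ t : ℝ, Complex.exp (t * Complex.I) ≠ 0 := fun t => Complex.exp_ne_zero _
  have habs : ∀ t : ℝ, Complex.abs (Complex.exp (t * Complex.I)) = 1 :=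
    Complex.abs_exp_ofReal_mul_I
  have hbze : ∀ t : ℝ, 1 - b * Complex.exp (t * Complex.I) ≠ 0 := by
    intro t hcon
    have h1 : Complex.abs (b * Complex.exp (t * Complex.I)) = 1 := by
      have : b * Complex.exp (t * Complex.I) = 1 := by linear_combination -hcon
      rw [this]; simp
    rw [map_mul, hab, habs, mul_one] at h1
    linarith
  have cg : Continuous fun t : ℝ => g (Complex.exp (t * Complex.I)) := contOn_comp_exp hR hg
  have cA : Continuous fun t : ℝ => (Complex.exp (t * Complex.I) * Complex.I) *
      ((Complex.exp (t * Complex.I) - a)⁻¹ * g (Complex.exp (t * Complex.I))) :=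
    (ce.mul continuous_const).mul
      (((ce.sub continuous_const).inv₀ (fun t => exp_sub_ne a ha t)).mul cg)
  have cB : Continuous fun t : ℝ => (Complex.exp (t * Complex.I) * Complex.I) *
      ((Complex.exp (t * Complex.I))⁻¹ * h (Complex.exp (t * Complex.I))) := by
    apply (ce.mul continuous_const).mul
    apply (ce.inv₀ hexp_ne).mul
    rw [hh]
    exact (((continuous_const.mul ce).div
      (continuous_const.sub (continuous_const.mul ce)) hbze).mul cg)
  have hkey : ∀ t : ℝ, (Complex.exp (t * Complex.I) * Complex.I) *
      ((Complex.exp (t * Complex.I) - a)⁻¹ * g (Complex.exp (t * Complex.I))) +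
      (Complex.exp (t * Complex.I) * Complex.I) *
      ((Complex.exp (t * Complex.I))⁻¹ * h (Complex.exp (t * Complex.I)))
      = Complex.I * ((Pk a t : ℂ) * g (Complex.exp (t * Complex.I))) := by
    intro t
    rw [Pk_complex a ha t, hh]
    set z := Complex.exp (t * Complex.I) with hzdef
    have hz : z ≠ 0 := hexp_ne t
    have hza : z - a ≠ 0 := exp_sub_ne a ha t
    have hbz : 1 - b * z ≠ 0 := hbze t
    have hz2 : z⁻¹ - b = (1 - b * z) / z := by
      field_simp
    rw [hz2, ← hb]
    have hbz' : 1 - z * b ≠ 0 := by rwa [mul_comm]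
    field_simp
    ring
  have hadd : ∫ t in (0:ℝ)..(2*π),
      ((Complex.exp (t * Complex.I) * Complex.I) *
        ((Complex.exp (t * Complex.I) - a)⁻¹ * g (Complex.exp (t * Complex.I))) +
      (Complex.exp (t * Complex.I) * Complex.I) *
        ((Complex.exp (t * Complex.I))⁻¹ * h (Complex.exp (t * Complex.I))))
      = 2 * π * Complex.I * g a := by
    rw [intervalIntegral.integral_add (cA.intervalIntegrable _ _) (cB.intervalIntegrable _ _),
      c1, c0, add_zero]
  simp only [hkey] at hadd
  rw [intervalIntegral.integral_const_mul] at hadd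
  have h2 : Complex.I * (2 * ↑π * g a) = 2 * ↑π * Complex.I * g a := by ring
  exact mul_left_cancel₀ Complex.I_ne_zero (hadd.trans h2.symm)




lemma Pk_nonneg {a : ℂ} (ha : Complex.abs a < 1) (t : ℝ) : 0 ≤ Pk a t := by
  apply div_nonneg
  · nlinarith [Complex.abs.nonneg a]
  · positivity

lemma Pk_continuous {a : ℂ} (ha : Complex.abs a < 1) : Continuous fun t => Pk a t := by
  apply continuous_const.div
  · exact (Complex.continuous_abs.comp
      ((Complex.continuous_exp.comp (Complex.continuous_ofReal.mul continuous_const)).sub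
        continuous_const)).pow 2
  · intro t
    exact pow_ne_zero 2 (Complex.abs.ne_zero (exp_sub_ne a ha t))

lemma Pk_integral {a : ℂ} (ha : Complex.abs a < 1) :
    ∫ t in (0:ℝ)..(2*π), Pk a t = 2 * π := by
  have h := poisson_formula (fun _ => (1:ℂ)) one_lt_two
    (differentiableOn_const 1) ha
  simp only [mul_one] at h
  rw [intervalIntegral.integral_ofReal] at h
  have h2 : ((2 * π : ℝ) : ℂ) = 2 * (π : ℂ) := by push_cast; ring
  exact Complex.ofReal_injective (h.trans h2.symm)

lemma jensen_pointwise (g : ℂ → ℂ) {R : ℝ} (hR : 1 < R)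
    (hg : DifferentiableOn ℂ g (Metric.ball 0 R)) {a : ℂ} (ha : Complex.abs a < 1)
    {p : ℝ} (hp : 1 ≤ p) :
    Complex.abs (g a) ^ p ≤ (2*π)⁻¹ *
      ∫ t in (0:ℝ)..(2*π), Pk a t * Complex.abs (g (Complex.exp (t * Complex.I))) ^ p := by
  have h2π : (0:ℝ) < 2 * π := by positivity
  have hp0 : p ≠ 0 := by linarith
  have cg : Continuous fun t : ℝ => g (Complex.exp (t * Complex.I)) := contOn_comp_exp hR hg
  have cabs : Continuous fun t : ℝ => Complex.abs (g (Complex.exp (t * Complex.I))) :=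
    Complex.continuous_abs.comp cg
  have cabsp : Continuous fun t : ℝ => Complex.abs (g (Complex.exp (t * Complex.I))) ^ p :=
    cabs.rpow_const (fun t => Or.inr (by linarith))
  have cP : Continuous fun t => Pk a t := Pk_continuous ha
  -- step 1 : |g a| ≤ (2π)⁻¹ ∫ P |g|
  have step1 : Complex.abs (g a) ≤ (2*π)⁻¹ *
      ∫ t in (0:ℝ)..(2*π), Pk a t * Complex.abs (g (Complex.exp (t * Complex.I))) := by
    have hpf := poisson_formula g hR hg ha
    have h0 : ‖∫ t in (0:ℝ)..(2*π), (Pk a t : ℂ) * g (Complex.exp (t * Complex.I))‖ ≤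
        ∫ t in (0:ℝ)..(2*π), ‖(Pk a t : ℂ) * g (Complex.exp (t * Complex.I))‖ :=
      intervalIntegral.norm_integral_le_integral_norm (by positivity)
    rw [hpf] at h0
    have h1 : ‖(2 * (π:ℂ)) * g a‖ = 2 * π * Complex.abs (g a) := by
      simp [Complex.norm_eq_abs, map_mul, Complex.abs_two, Complex.abs_ofReal,
        abs_of_pos pi_pos, mul_assoc]
    have h2 : (∫ t in (0:ℝ)..(2*π), ‖(Pk a t : ℂ) * g (Complex.exp (t * Complex.I))‖)
        = ∫ t in (0:ℝ)..(2*π), Pk a t * Complex.abs (g (Complex.exp (t * Complex.I))) := by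
      apply intervalIntegral.integral_congr
      intro t _
      simp only [norm_mul, Complex.norm_eq_abs, Complex.abs_ofReal,
        _root_.abs_of_nonneg (Pk_nonneg ha t)]
    rw [show (2 * ↑π * g a : ℂ) = (2 * (π:ℂ)) * g a by ring, h1, h2] at h0
    rw [inv_mul_eq_div, le_div_iff₀ h2π]
    linarith
  rcases eq_or_lt_of_le hp with hpeq | hplt
  · simp only [← hpeq, Real.rpow_one]
    exact step1
  -- case 1 < p
  set q : ℝ := Real.conjExponent p with hqdef
  have hpq : p.HolderConjugate q := Real.HolderConjugate.conjExponent hplt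
  have hq : q = p / (p - 1) := rfl
  have hq0 : 0 < q := hpq.symm.pos
  set B : ℝ := (2*π)⁻¹ *
      ∫ t in (0:ℝ)..(2*π), Pk a t * Complex.abs (g (Complex.exp (t * Complex.I))) ^ p with hBdef
  have hBnn : 0 ≤ B := by
    apply mul_nonneg (by positivity)
    apply intervalIntegral.integral_nonneg (by positivity)
    intro u _
    exact mul_nonneg (Pk_nonneg ha u) (Real.rpow_nonneg (Complex.abs.nonneg _) p)
  -- pointwise Young-type inequality
  have young : ∀ lam : ℝ, 0 < lam → ∀ x : ℝ, 0 ≤ x →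
      x ≤ lam ^ (1 - p) * x ^ p / p + lam / q := by
    intro lam hlam x hx
    have h1 := Real.young_inequality_of_nonneg
      (a := x * lam ^ ((1 - p)/p)) (b := lam ^ ((p - 1)/p))
      (mul_nonneg hx (Real.rpow_nonneg hlam.le _)) (Real.rpow_nonneg hlam.le ((p-1)/p)) hpq
    have e1 : x * lam ^ ((1 - p)/p) * lam ^ ((p - 1)/p) = x := by
      rw [mul_assoc, ← Real.rpow_add hlam]
      have hz : (1 - p)/p + (p - 1)/p = 0 := by ring
      rw [hz, Real.rpow_zero, mul_one]
    have e2 : (x * lam ^ ((1 - p)/p)) ^ p = x ^ p * lam ^ (1 - p) := by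
      rw [Real.mul_rpow hx (Real.rpow_nonneg hlam.le _), ← Real.rpow_mul hlam.le,
        div_mul_cancel₀ _ hp0]
    have e3 : (lam ^ ((p - 1)/p)) ^ q = lam := by
      rw [← Real.rpow_mul hlam.le, hq]
      rw [show (p - 1)/p * (p/(p-1)) = 1 by
        have h1 : p - 1 ≠ 0 := by linarith
        field_simp]
      exact Real.rpow_one lam
    rw [e1, e2, e3] at h1
    calc x ≤ x ^ p * lam ^ (1 - p) / p + lam / q := h1
    _ = lam ^ (1 - p) * x ^ p / p + lam / q := by ring
  -- integrated inequality
  have key : ∀ lam : ℝ, 0 < lam →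
      Complex.abs (g a) ≤ lam ^ (1 - p) * B / p + lam / q := by
    intro lam hlam
    have hmono : (∫ t in (0:ℝ)..(2*π), Pk a t * Complex.abs (g (Complex.exp (t * Complex.I))))
        ≤ ∫ t in (0:ℝ)..(2*π), (lam ^ (1 - p) / p *
            (Pk a t * Complex.abs (g (Complex.exp (t * Complex.I))) ^ p) + lam / q * Pk a t) := by
      apply intervalIntegral.integral_mono_on h2π.le
        ((cP.mul cabs).intervalIntegrable _ _)
        (((continuous_const.mul (cP.mul cabsp)).add (continuous_const.mul cP)).intervalIntegrable _ _)
      intro t _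
      have := young lam hlam (Complex.abs (g (Complex.exp (t * Complex.I)))) (Complex.abs.nonneg _)
      have hPnn := Pk_nonneg ha t
      calc Pk a t * Complex.abs (g (Complex.exp (t * Complex.I)))
          ≤ Pk a t * (lam ^ (1 - p) * Complex.abs (g (Complex.exp (t * Complex.I))) ^ p / p + lam / q) :=
            mul_le_mul_of_nonneg_left this hPnn
        _ = lam ^ (1 - p) / p * (Pk a t * Complex.abs (g (Complex.exp (t * Complex.I))) ^ p)
            + lam / q * Pk a t := by ring
    rw [intervalIntegral.integral_add (f := fun t => lam ^ (1 - p) / p *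
        (Pk a t * Complex.abs (g (Complex.exp (t * Complex.I))) ^ p)) (g := fun t => lam / q * Pk a t)
      (((continuous_const.mul (cP.mul cabsp))).intervalIntegrable _ _)
      ((continuous_const.mul cP).intervalIntegrable _ _),
      intervalIntegral.integral_const_mul, intervalIntegral.integral_const_mul,
      Pk_integral ha] at hmono
    calc Complex.abs (g a) ≤ (2*π)⁻¹ *
        ∫ t in (0:ℝ)..(2*π), Pk a t * Complex.abs (g (Complex.exp (t * Complex.I))) := step1
      _ ≤ (2*π)⁻¹ * (lam ^ (1 - p) / p *
          (∫ t in (0:ℝ)..(2*π), Pk a t * Complex.abs (g (Complex.exp (t * Complex.I))) ^ p)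
          + lam / q * (2 * π)) := by
          apply mul_le_mul_of_nonneg_left hmono (by positivity)
      _ = lam ^ (1 - p) * B / p + lam / q := by
          rw [hBdef]
          generalize (∫ t in (0:ℝ)..(2*π), Pk a t * Complex.abs (g (Complex.exp (t * Complex.I))) ^ p) = J
          field_simp
  by_cases hB0 : B = 0
  · have habs0 : Complex.abs (g a) = 0 := by
      by_contra hne
      have hpos : 0 < Complex.abs (g a) := lt_of_le_of_ne (Complex.abs.nonneg _) (Ne.symm hne)
      have := key (q * Complex.abs (g a) / 2) (by positivity)
      rw [hB0] at this
      simp only [mul_zero, zero_div, zero_add] at this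
      have heq : q * Complex.abs (g a) / 2 / q = Complex.abs (g a) / 2 := by
        field_simp
      rw [heq] at this
      linarith
    rw [habs0, Real.zero_rpow hp0]
    exact hBnn
  · have hBpos : 0 < B := lt_of_le_of_ne hBnn (Ne.symm hB0)
    set lam : ℝ := B ^ p⁻¹ with hlamdef
    have hlam : 0 < lam := Real.rpow_pos_of_pos hBpos _
    have hkey := key lam hlam
    have e1 : lam ^ (1 - p) * B = lam := by
      rw [hlamdef, ← Real.rpow_mul hBnn]
      calc B ^ (p⁻¹ * (1 - p)) * B = B ^ (p⁻¹ * (1 - p)) * B ^ (1:ℝ) := by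
            rw [Real.rpow_one]
        _ = B ^ (p⁻¹ * (1 - p) + 1) := (Real.rpow_add hBpos _ _).symm
        _ = B ^ p⁻¹ := by
            congr 1
            field_simp
            ring
    rw [e1] at hkey
    have hle : Complex.abs (g a) ≤ lam := by
      have hsum := hpq.inv_add_inv_eq_one
      have : lam / p + lam / q = lam := by
        rw [div_eq_mul_inv, div_eq_mul_inv, ← mul_add, hsum, mul_one]
      linarith [hkey, this]
    have hfin := Real.rpow_le_rpow (Complex.abs.nonneg _) hle (by linarith : (0:ℝ) ≤ p)
    rwa [hlamdef, ← Real.rpow_mul hBnn, inv_mul_cancel₀ hp0, Real.rpow_one] at hfin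




lemma abs_exp_symm (s θ t : ℝ) :
    Complex.abs (Complex.exp (t * Complex.I) - s * Complex.exp (θ * Complex.I))
      = Complex.abs (Complex.exp (θ * Complex.I) - s * Complex.exp (t * Complex.I)) := by
  have h1 : Complex.exp (↑t * Complex.I) - ↑s * Complex.exp (↑θ * Complex.I)
      = Complex.exp (↑t * Complex.I) * Complex.exp (↑θ * Complex.I) *
        ((starRingEnd ℂ) (Complex.exp (↑θ * Complex.I) - ↑s * Complex.exp (↑t * Complex.I))) := by
    rw [map_sub, map_mul, conj_exp, conj_exp, Complex.conj_ofReal]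
    have hne1 : Complex.exp (↑t * Complex.I) ≠ 0 := Complex.exp_ne_zero _
    have hne2 : Complex.exp (↑θ * Complex.I) ≠ 0 := Complex.exp_ne_zero _
    field_simp
  rw [h1, map_mul, map_mul, Complex.abs_exp_ofReal_mul_I, Complex.abs_exp_ofReal_mul_I,
    Complex.abs_conj, one_mul, one_mul]

lemma Pk_symm (s θ t : ℝ) :
    Pk ((s : ℂ) * Complex.exp (θ * Complex.I)) t
      = Pk ((s : ℂ) * Complex.exp (t * Complex.I)) θ := by
  unfold Pk
  rw [abs_exp_symm]
  congr 2
  rw [map_mul, map_mul, Complex.abs_exp_ofReal_mul_I, Complex.abs_exp_ofReal_mul_I]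

/-- For `f` analytic on the unit disk and `1 ≤ p < ∞`, the integral means
`r ↦ (∫_𝕋 |f(rξ)|^p dm(ξ))^{1/p}` are nondecreasing in `r ∈ [0,1)`. -/
theorem integral_means_monotone (f : ℂ → ℂ) (hf : DifferentiableOn ℂ f (Metric.ball 0 1))
    (p : ℝ) (hp : 1 ≤ p) :
    ∀ r₁ r₂ : ℝ, 0 ≤ r₁ → r₁ ≤ r₂ → r₂ < 1 →
      ((2 * π)⁻¹ *
          ∫ θ in (0 : ℝ)..(2 * π), ‖f (r₁ * Complex.exp (θ * Complex.I))‖ ^ p) ^ p⁻¹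
        ≤ ((2 * π)⁻¹ *
          ∫ θ in (0 : ℝ)..(2 * π), ‖f (r₂ * Complex.exp (θ * Complex.I))‖ ^ p) ^ p⁻¹ := by
  intro r₁ r₂ hr₁ hle hr₂
  simp only [Complex.norm_eq_abs]
  have h2π : (0:ℝ) < 2 * π := by positivity
  have hp0 : (0:ℝ) < p := by linarith
  rcases eq_or_lt_of_le hle with rfl | hlt
  · exact le_refl _
  have hr₂0 : 0 < r₂ := lt_of_le_of_lt hr₁ hlt
  set g : ℂ → ℂ := fun z => f ((r₂ : ℂ) * z) with hgdef
  have hR : 1 < r₂⁻¹ := by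
    rw [← one_div, lt_div_iff₀ hr₂0]
    linarith
  have hg : DifferentiableOn ℂ g (Metric.ball 0 r₂⁻¹) := by
    apply DifferentiableOn.comp hf
      (((differentiable_const ((r₂:ℂ))).mul differentiable_id).differentiableOn)
    intro z hz
    rw [mem_ball_zero_iff] at hz
    simp only [Pi.mul_apply, id_eq, mem_ball_zero_iff]
    rw [norm_mul, Complex.norm_real, Real.norm_eq_abs, _root_.abs_of_pos hr₂0]
    calc r₂ * ‖z‖ < r₂ * r₂⁻¹ := by
          apply mul_lt_mul_of_pos_left hz hr₂0
      _ = 1 := mul_inv_cancel₀ hr₂0.ne'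
  set s : ℝ := r₁ / r₂ with hsdef
  have hs0 : 0 ≤ s := div_nonneg hr₁ hr₂0.le
  have hs1 : s < 1 := (div_lt_one hr₂0).2 hlt
  have habs : ∀ θ : ℝ, Complex.abs ((s:ℂ) * Complex.exp (θ * Complex.I)) < 1 := by
    intro θ
    rw [map_mul, Complex.abs_ofReal, Complex.abs_exp_ofReal_mul_I, mul_one, _root_.abs_of_nonneg hs0]
    exact hs1
  have hcomp : ∀ θ : ℝ, f ((r₁:ℂ) * Complex.exp (θ * Complex.I))
      = g ((s:ℂ) * Complex.exp (θ * Complex.I)) := by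
    intro θ
    show f (↑r₁ * Complex.exp (↑θ * Complex.I)) = f (↑r₂ * (↑s * Complex.exp (↑θ * Complex.I)))
    rw [← mul_assoc, ← Complex.ofReal_mul]
    have hr : r₂ * s = r₁ := by
      rw [hsdef, mul_comm, div_mul_cancel₀ _ hr₂0.ne']
    rw [hr]
  -- continuity facts
  have cg : Continuous fun t : ℝ => g (Complex.exp (t * Complex.I)) := contOn_comp_exp hR hg
  have cabsp : Continuous fun t : ℝ => Complex.abs (g (Complex.exp (t * Complex.I))) ^ p :=
    (Complex.continuous_abs.comp cg).rpow_const (fun t => Or.inr hp0.le)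
  have ce1 : Continuous fun z : ℝ × ℝ => Complex.exp ((z.1 : ℂ) * Complex.I) :=
    Complex.continuous_exp.comp ((Complex.continuous_ofReal.comp continuous_fst).mul
      continuous_const)
  have ce2 : Continuous fun z : ℝ × ℝ => Complex.exp ((z.2 : ℂ) * Complex.I) :=
    Complex.continuous_exp.comp ((Complex.continuous_ofReal.comp continuous_snd).mul
      continuous_const)
  have hne : ∀ z : ℝ × ℝ,
      Complex.exp ((z.2 : ℂ) * Complex.I) - (s:ℂ) * Complex.exp ((z.1 : ℂ) * Complex.I) ≠ 0 := by
    intro z hcon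
    rw [sub_eq_zero] at hcon
    have h1 : Complex.abs (Complex.exp ((z.2:ℂ) * Complex.I)) = 1 :=
      Complex.abs_exp_ofReal_mul_I _
    rw [hcon] at h1
    rw [map_mul, Complex.abs_ofReal, Complex.abs_exp_ofReal_mul_I, mul_one,
      _root_.abs_of_nonneg hs0] at h1
    linarith
  have cPk : Continuous fun z : ℝ × ℝ => Pk ((s:ℂ) * Complex.exp ((z.1:ℂ) * Complex.I)) z.2 := by
    unfold Pk
    apply Continuous.div
    · exact continuous_const.sub
        ((Complex.continuous_abs.comp (continuous_const.mul ce1)).pow 2)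
    · exact (Complex.continuous_abs.comp (ce2.sub (continuous_const.mul ce1))).pow 2
    · intro z
      exact pow_ne_zero 2 (Complex.abs.ne_zero (hne z))
  set F : ℝ → ℝ → ℝ := fun θ t => (2*π)⁻¹ *
    (Pk ((s:ℂ) * Complex.exp (θ * Complex.I)) t *
      Complex.abs (g (Complex.exp (t * Complex.I))) ^ p) with hF
  have hFc : Continuous (Function.uncurry F) := by
    apply continuous_const.mul
    exact cPk.mul (cabsp.comp continuous_snd)
  have int1 : Continuous fun θ : ℝ => Complex.abs (f ((r₁:ℂ) * Complex.exp (θ * Complex.I))) ^ p := by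
    have : (fun θ : ℝ => Complex.abs (f ((r₁:ℂ) * Complex.exp (θ * Complex.I))) ^ p)
        = fun θ : ℝ => Complex.abs (g ((s:ℂ) * Complex.exp (θ * Complex.I))) ^ p := by
      funext θ
      rw [hcomp θ]
    rw [this]
    apply Continuous.rpow_const _ (fun t => Or.inr hp0.le)
    apply Complex.continuous_abs.comp
    apply hg.continuousOn.comp_continuous
    · exact continuous_const.mul (Complex.continuous_exp.comp
        (Complex.continuous_ofReal.mul continuous_const))
    · intro θ
      rw [mem_ball_zero_iff, Complex.norm_eq_abs]
      calc Complex.abs ((s:ℂ) * Complex.exp (θ * Complex.I)) < 1 := habs θ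
        _ ≤ r₂⁻¹ := hR.le
  have int2 : Continuous fun θ : ℝ => ∫ t in (0:ℝ)..(2*π), F θ t :=
    intervalIntegral.continuous_parametric_intervalIntegral_of_continuous' hFc 0 (2*π)
  have hmono : (∫ θ in (0:ℝ)..(2*π), Complex.abs (f ((r₁:ℂ) * Complex.exp (θ * Complex.I))) ^ p)
      ≤ ∫ θ in (0:ℝ)..(2*π), ∫ t in (0:ℝ)..(2*π), F θ t := by
    apply intervalIntegral.integral_mono_on h2π.le (int1.intervalIntegrable _ _)
      (int2.intervalIntegrable _ _)
    intro θ _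
    rw [hcomp θ]
    have : (∫ t in (0:ℝ)..(2*π), F θ t) = (2*π)⁻¹ *
        ∫ t in (0:ℝ)..(2*π), Pk ((s:ℂ) * Complex.exp (θ * Complex.I)) t *
          Complex.abs (g (Complex.exp (t * Complex.I))) ^ p := by
      simp only [hF]
      rw [intervalIntegral.integral_const_mul]
    rw [this]
    exact jensen_pointwise g hR hg (habs θ) hp
  have hswap : (∫ θ in (0:ℝ)..(2*π), ∫ t in (0:ℝ)..(2*π), F θ t)
      = ∫ t in (0:ℝ)..(2*π), ∫ θ in (0:ℝ)..(2*π), F θ t := by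
    have hint : MeasureTheory.Integrable (Function.uncurry F)
        ((MeasureTheory.volume.restrict (Set.Ioc (0:ℝ) (2*π))).prod
          (MeasureTheory.volume.restrict (Set.Ioc (0:ℝ) (2*π)))) := by
      rw [Measure.prod_restrict]
      refine MeasureTheory.IntegrableOn.mono_set ?_
        (Set.prod_mono Set.Ioc_subset_Icc_self Set.Ioc_subset_Icc_self)
      exact hFc.continuousOn.integrableOn_compact' (isCompact_Icc.prod isCompact_Icc)
        (measurableSet_Icc.prod measurableSet_Icc)
    simp only [intervalIntegral.integral_of_le h2π.le]
    exact MeasureTheory.integral_integral_swap hint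
  have hinner : ∀ t : ℝ, (∫ θ in (0:ℝ)..(2*π), F θ t)
      = Complex.abs (g (Complex.exp (t * Complex.I))) ^ p := by
    intro t
    have hcong : (fun θ => F θ t) = fun θ =>
        ((2*π)⁻¹ * Complex.abs (g (Complex.exp (t * Complex.I))) ^ p) *
          Pk ((s:ℂ) * Complex.exp (t * Complex.I)) θ := by
      funext θ
      simp only [hF]
      rw [Pk_symm s θ t]
      ring
    rw [hcong, intervalIntegral.integral_const_mul, Pk_integral (habs t)]
    field_simp
  have hfinal : (∫ θ in (0:ℝ)..(2*π), Complex.abs (f ((r₁:ℂ) * Complex.exp (θ * Complex.I))) ^ p)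
      ≤ ∫ θ in (0:ℝ)..(2*π), Complex.abs (f ((r₂:ℂ) * Complex.exp (θ * Complex.I))) ^ p := by
    refine hmono.trans ?_
    rw [hswap]
    rw [intervalIntegral.integral_congr (g := fun t =>
      Complex.abs (g (Complex.exp (t * Complex.I))) ^ p) (fun t _ => hinner t)]
  apply Real.rpow_le_rpow
  · apply mul_nonneg (by positivity)
    apply intervalIntegral.integral_nonneg h2π.le
    intro u _
    exact Real.rpow_nonneg (Complex.abs.nonneg _) p
  · exact mul_le_mul_of_nonneg_left hfinal (by positivity)
  · exact inv_nonneg.2 hp0.le
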